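/- For any graph H of diameter two and any connected graph G of order n ≥ 2, dim_l(G ⊙ H) = n · dim_l(H). -/
import Mathlib


open SimpleGraph

/-- A set `S` is a local metric generator for `G` if every pair of adjacent
vertices is distinguished (by distance) by some element of `S`. -/
def IsLocalMetricGenerator {α : Type*} (G : SimpleGraph α) (S : Set α) : Prop :=
  ∀ x y : α, G.Adj x y → ∃ v ∈ S, G.dist v x ≠ G.dist v y

/-- The local metric dimension of a graph. -/
noncomputable def localMetricDim {α : Type*} (G : SimpleGraph α) : ℕ :=
  sInf {k | ∃ S : Finset α, S.card = k ∧ IsLocalMetricGenerator G ↑S}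

/-- A local metric basis: a minimum-cardinality local metric generator. -/
def IsLocalMetricBasis {α : Type*} (G : SimpleGraph α) (S : Finset α) : Prop :=
  IsLocalMetricGenerator G ↑S ∧ S.card = localMetricDim G

/-- The corona product `G ⊙ H`. -/
def corona {α β : Type*} (G : SimpleGraph α) (H : SimpleGraph β) :
    SimpleGraph (α ⊕ α × β) :=
  SimpleGraph.fromRel (fun x y => match x, y with
    | Sum.inl a, Sum.inl a' => G.Adj a a'
    | Sum.inl a, Sum.inr p => a = p.1
    | Sum.inr p, Sum.inl a => a = p.1
    | Sum.inr p, Sum.inr q => p.1 = q.1 ∧ H.Adj p.2 q.2)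

/-- The join `K₁ + H`; the vertex of `K₁` is `none`. -/
def joinK1 {β : Type*} (H : SimpleGraph β) : SimpleGraph (Option β) :=
  SimpleGraph.fromRel (fun x y => match x, y with
    | none, some _ => True
    | some b, some b' => H.Adj b b'
    | _, _ => False)

/-- Eccentricity of a vertex (in `ℕ∞`). -/
noncomputable def ecc {α : Type*} (G : SimpleGraph α) (x : α) : ℕ∞ :=
  ⨆ y, G.edist x y

/-- Radius of a graph (in `ℕ∞`). -/
noncomputable def gradius {α : Type*} (G : SimpleGraph α) : ℕ∞ :=
  ⨅ x, ecc G x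

/-- Diameter of a graph (in `ℕ∞`). -/
noncomputable def gdiam {α : Type*} (G : SimpleGraph α) : ℕ∞ :=
  ⨆ x, ecc G x

section Aux
variable {α β : Type*} {G : SimpleGraph α} {H : SimpleGraph β}

lemma corona_adj_inl_inl {a a' : α} :
    (corona G H).Adj (Sum.inl a) (Sum.inl a') ↔ G.Adj a a' := by
  unfold corona
  rw [SimpleGraph.fromRel_adj]
  constructor
  · rintro ⟨-, h | h⟩
    · exact h
    · exact h.symm
  · intro h
    exact ⟨by simp [h.ne], Or.inl h⟩

lemma corona_adj_inl_inr {a : α} {p : α × β} :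
    (corona G H).Adj (Sum.inl a) (Sum.inr p) ↔ a = p.1 := by
  unfold corona
  rw [SimpleGraph.fromRel_adj]
  constructor
  · rintro ⟨-, h | h⟩ <;> exact h
  · intro h
    exact ⟨by simp, Or.inl h⟩

lemma corona_adj_inr_inl {a : α} {p : α × β} :
    (corona G H).Adj (Sum.inr p) (Sum.inl a) ↔ a = p.1 := by
  rw [SimpleGraph.adj_comm, corona_adj_inl_inr]

lemma corona_adj_inr_inr {p q : α × β} :
    (corona G H).Adj (Sum.inr p) (Sum.inr q) ↔ p.1 = q.1 ∧ H.Adj p.2 q.2 := by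
  unfold corona
  rw [SimpleGraph.fromRel_adj]
  constructor
  · rintro ⟨-, ⟨h1, h2⟩ | ⟨h1, h2⟩⟩
    · exact ⟨h1, h2⟩
    · exact ⟨h1.symm, h2.symm⟩
  · rintro ⟨h1, h2⟩
    refine ⟨?_, Or.inl ⟨h1, h2⟩⟩
    intro he
    rw [Sum.inr.injEq] at he
    exact h2.ne (congrArg Prod.snd he)

/-- The embedding of `G` into the corona. -/
def coronaInlHom (G : SimpleGraph α) (H : SimpleGraph β) : G →g corona G H where
  toFun := Sum.inl
  map_rel' := fun h => corona_adj_inl_inl.mpr h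

/-- The embedding of the `a`-th copy of `H` into the corona. -/
def coronaInrHom (G : SimpleGraph α) (H : SimpleGraph β) (a : α) : H →g corona G H where
  toFun := fun b => Sum.inr (a, b)
  map_rel' := fun h => corona_adj_inr_inr.mpr ⟨rfl, h⟩

lemma corona_connected (hG : G.Connected) : (corona G H).Connected := by
  have hne : Nonempty α := hG.nonempty
  obtain ⟨a0⟩ := hne
  rw [SimpleGraph.connected_iff]
  refine ⟨?_, ⟨Sum.inl a0⟩⟩
  have key : ∀ x : α ⊕ α × β, (corona G H).Reachable x (Sum.inl a0) := by
    intro x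
    have base : ∀ a : α, (corona G H).Reachable (Sum.inl a) (Sum.inl a0) :=
      fun a => (hG.preconnected a a0).map (coronaInlHom G H)
    match x with
    | Sum.inl a => exact base a
    | Sum.inr p =>
      exact ((corona_adj_inr_inl.mpr rfl).reachable).trans (base p.1)
  intro x y
  exact (key x).trans (key y).symm

/-- Lipschitz lower bound for graph distances. -/
lemma le_dist_of_lip {V : Type*} {C : SimpleGraph V} (f : V → ℕ) {t v : V}
    (h0 : f t = 0) (hlip : ∀ ⦃x y⦄, C.Adj x y → f x ≤ f y + 1)
    (hr : C.Reachable v t) : f v ≤ C.dist v t := by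
  obtain ⟨w, hw⟩ := hr.exists_walk_length_eq_dist
  rw [← hw]
  clear hw hr
  induction w with
  | nil => simp [h0]
  | cons h p ih =>
    simp only [SimpleGraph.Walk.length_cons]
    exact (hlip h).trans (Nat.add_le_add_right (ih h0) 1)

end Aux

section Dist
variable {α β : Type*} {G : SimpleGraph α} {H : SimpleGraph β}

lemma adj_dist_le (hG : G.Connected) {a a' : α} (h : G.Adj a a') (c : α) :
    G.dist a c ≤ G.dist a' c + 1 := by
  have h1 : G.dist a a' = 1 := SimpleGraph.dist_eq_one_iff_adj.mpr h
  have := hG.dist_triangle (u := a) (v := a') (w := c)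
  omega


private noncomputable def fA (G : SimpleGraph α) (a₀ : α) : α ⊕ α × β → ℕ :=
  Sum.elim (fun a => G.dist a a₀) (fun p => G.dist p.1 a₀ + 1)

open Classical in
private noncomputable def fB (G : SimpleGraph α) (H : SimpleGraph β) (a₀ : α) (b₀ : β) : α ⊕ α × β → ℕ :=
  Sum.elim (fun a => G.dist a a₀ + 1)
    (fun p => if p.1 = a₀ then H.dist p.2 b₀ else G.dist p.1 a₀ + 2)

lemma lipA (hG : G.Connected) (a₀ : α) : ∀ ⦃x y : α ⊕ α × β⦄, (corona G H).Adj x y →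
    fA (β := β) G a₀ x ≤ fA (β := β) G a₀ y + 1 := by
  intro x y h
  match x, y with
  | Sum.inl a, Sum.inl a' =>
    rw [corona_adj_inl_inl] at h
    exact adj_dist_le hG h a₀
  | Sum.inl a, Sum.inr p =>
    rw [corona_adj_inl_inr] at h
    subst h
    simp only [fA, Sum.elim_inl, Sum.elim_inr]
    linarith
  | Sum.inr p, Sum.inl a =>
    rw [corona_adj_inr_inl] at h
    subst h
    simp [fA]
  | Sum.inr p, Sum.inr q =>
    rw [corona_adj_inr_inr] at h
    simp only [fA, Sum.elim_inr, h.1]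
    linarith

lemma lipB (hG : G.Connected) (hHc : H.Connected) (hH2 : ∀ b b' : β, H.dist b b' ≤ 2) (a₀ : α) (b₀ : β) : ∀ ⦃x y : α ⊕ α × β⦄, (corona G H).Adj x y →
    fB G H a₀ b₀ x ≤ fB G H a₀ b₀ y + 1 := by
  intro x y h
  match x, y with
  | Sum.inl a, Sum.inl a' =>
    rw [corona_adj_inl_inl] at h
    have := adj_dist_le hG h a₀
    simp only [fB, Sum.elim_inl]
    linarith
  | Sum.inl a, Sum.inr p =>
    rw [corona_adj_inl_inr] at h
    subst h
    simp only [fB, Sum.elim_inl, Sum.elim_inr]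
    split_ifs with h'
    · subst h'
      simp [SimpleGraph.dist_self]
    · linarith
  | Sum.inr p, Sum.inl a =>
    rw [corona_adj_inr_inl] at h
    subst h
    simp only [fB, Sum.elim_inl, Sum.elim_inr]
    split_ifs with h'
    · subst h'
      simp only [SimpleGraph.dist_self, Nat.zero_add]
      exact hH2 _ _
    · linarith
  | Sum.inr p, Sum.inr q =>
    rw [corona_adj_inr_inr] at h
    obtain ⟨p1, p2⟩ := p
    obtain ⟨q1, q2⟩ := q
    obtain ⟨h1, h2⟩ := h
    simp only at h1 h2
    subst h1
    simp only [fB, Sum.elim_inr]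
    split_ifs with h'
    · have := adj_dist_le hHc h2 b₀
      linarith
    · linarith

lemma corona_dist_inl_inl (hG : G.Connected) (a a' : α) :
    (corona G H).dist (Sum.inl a) (Sum.inl a') = G.dist a a' := by
  refine le_antisymm ?_ ?_
  · obtain ⟨w, hw⟩ := hG.exists_walk_length_eq_dist a a'
    calc (corona G H).dist (Sum.inl a) (Sum.inl a')
        ≤ (w.map (coronaInlHom G H)).length := SimpleGraph.dist_le _
      _ = w.length := SimpleGraph.Walk.length_map _ _
      _ = G.dist a a' := hw
  · have := le_dist_of_lip (fA (β := β) G a') (t := Sum.inl a') (v := Sum.inl a)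
      (by simp [fA]) (lipA hG a') ((corona_connected (H := H) hG) _ _)
    simpa [fA] using this

lemma corona_dist_inl_inr (hG : G.Connected) (hHc : H.Connected) (hH2 : ∀ b b' : β, H.dist b b' ≤ 2) (a' a : α) (b : β) :
    (corona G H).dist (Sum.inl a') (Sum.inr (a, b)) = G.dist a' a + 1 := by
  have hC := corona_connected (H := H) hG
  refine le_antisymm ?_ ?_
  · have h1 : (corona G H).dist (Sum.inl a) (Sum.inr (a, b)) = 1 :=
      SimpleGraph.dist_eq_one_iff_adj.mpr (corona_adj_inl_inr.mpr rfl)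
    have := hC.dist_triangle (u := Sum.inl a') (v := Sum.inl a) (w := Sum.inr (a, b))
    rw [corona_dist_inl_inl hG, h1] at this
    exact this
  · have := le_dist_of_lip (fB G H a b) (t := Sum.inr (a, b)) (v := Sum.inl a')
      (by simp [fB]) (lipB hG hHc hH2 a b) (hC _ _)
    simpa [fB] using this

lemma corona_dist_inr_inr_same (hG : G.Connected) (hHc : H.Connected) (hH2 : ∀ b b' : β, H.dist b b' ≤ 2) (a : α) (b b' : β) :
    (corona G H).dist (Sum.inr (a, b)) (Sum.inr (a, b')) = H.dist b b' := by
  refine le_antisymm ?_ ?_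
  · obtain ⟨w, hw⟩ := hHc.exists_walk_length_eq_dist b b'
    calc (corona G H).dist (Sum.inr (a, b)) (Sum.inr (a, b'))
        ≤ (w.map (coronaInrHom G H a)).length := SimpleGraph.dist_le _
      _ = w.length := SimpleGraph.Walk.length_map _ _
      _ = H.dist b b' := hw
  · have := le_dist_of_lip (fB G H a b') (t := Sum.inr (a, b')) (v := Sum.inr (a, b))
      (by simp [fB]) (lipB hG hHc hH2 a b') ((corona_connected hG) _ _)
    simpa [fB] using this

lemma corona_dist_inr_inr_ne (hG : G.Connected) (hHc : H.Connected) (hH2 : ∀ b b' : β, H.dist b b' ≤ 2) {a a' : α} (hne : a ≠ a') (b b' : β) :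
    (corona G H).dist (Sum.inr (a, b)) (Sum.inr (a', b')) = G.dist a a' + 2 := by
  have hC := corona_connected (H := H) hG
  refine le_antisymm ?_ ?_
  · have h1 : (corona G H).dist (Sum.inr (a, b)) (Sum.inl a) = 1 :=
      SimpleGraph.dist_eq_one_iff_adj.mpr (corona_adj_inr_inl.mpr rfl)
    have h2 := corona_dist_inl_inr (H := H) hG hHc hH2 a a' b'
    have := hC.dist_triangle (u := Sum.inr (a, b)) (v := Sum.inl a) (w := Sum.inr (a', b'))
    rw [h1, h2] at this
    omega
  · have := le_dist_of_lip (fB G H a' b') (t := Sum.inr (a', b')) (v := Sum.inr (a, b))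
      (by simp [fB]) (lipB hG hHc hH2 a' b') (hC _ _)
    simpa [fB, hne] using this

end Dist

section Main
variable {α β : Type*} {G : SimpleGraph α} {H : SimpleGraph β}

lemma univ_isLocalMetricGenerator (C : SimpleGraph α) [Fintype α] :
    IsLocalMetricGenerator C ↑(Finset.univ : Finset α) := by
  intro x y h
  refine ⟨x, by simp, ?_⟩
  rw [SimpleGraph.dist_self, SimpleGraph.dist_eq_one_iff_adj.mpr h]
  simp

lemma localMetricDim_le [Fintype α] (C : SimpleGraph α) {S : Finset α}
    (h : IsLocalMetricGenerator C ↑S) : localMetricDim C ≤ S.card :=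
  Nat.sInf_le ⟨S, rfl, h⟩

lemma exists_basis [Fintype α] (C : SimpleGraph α) :
    ∃ S : Finset α, S.card = localMetricDim C ∧ IsLocalMetricGenerator C ↑S := by
  have := Nat.sInf_mem
    (s := {k | ∃ S : Finset α, S.card = k ∧ IsLocalMetricGenerator C ↑S})
    ⟨_, Finset.univ, rfl, univ_isLocalMetricGenerator C⟩
  obtain ⟨S, h1, h2⟩ := this
  exact ⟨S, h1, h2⟩

lemma gdiam_facts (hd : gdiam H = 2) :
    (∀ b b' : β, H.dist b b' ≤ 2) ∧ H.Connected ∧ ∃ b b' : β, H.Adj b b' := by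
  have hedist : ∀ b b' : β, H.edist b b' ≤ 2 := by
    intro b b'
    calc H.edist b b' ≤ ecc H b := le_iSup _ b'
      _ ≤ gdiam H := le_iSup _ b
      _ = 2 := hd
  have hne : Nonempty β := by
    by_contra h
    rw [not_nonempty_iff] at h
    rw [gdiam, iSup_of_empty] at hd
    exact (by simp : (⊥ : ℕ∞) ≠ 2) hd
  have hreach : ∀ b b' : β, H.Reachable b b' := by
    intro b b'
    apply SimpleGraph.reachable_of_edist_ne_top
    exact ne_top_of_le_ne_top (by simp) (hedist b b')
  have hH2 : ∀ b b' : β, H.dist b b' ≤ 2 := by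
    intro b b'
    have := ENat.toNat_le_toNat (hedist b b') (by simp)
    simpa [SimpleGraph.dist] using this
  have hHc : H.Connected := (SimpleGraph.connected_iff H).mpr ⟨hreach, hne⟩
  refine ⟨hH2, hHc, ?_⟩
  have hex : ∃ x y : β, H.edist x y ≠ 0 := by
    by_contra h
    push_neg at h
    have : gdiam H = 0 := by
      rw [gdiam]
      simp [ecc, h]
    rw [this] at hd
    exact (by simp : (0 : ℕ∞) ≠ 2) hd
  obtain ⟨x, y, hxy⟩ := hex
  have hxyne : x ≠ y := fun he => hxy (he ▸ SimpleGraph.edist_self)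
  obtain ⟨w⟩ := hreach x y
  cases w with
  | nil => exact absurd rfl hxyne
  | cons h p => exact ⟨_, _, h⟩

end Main

/-- For `H` of diameter two and connected `G` of order `n ≥ 2`,
`dim_l (G ⊙ H) = n ⬝ dim_l H`. -/
theorem stmt13 {α β : Type*} [Fintype α] [Fintype β] (G : SimpleGraph α) (H : SimpleGraph β)
    (hG : G.Connected) (hd : gdiam H = 2) (hn : 2 ≤ Fintype.card α) :
    localMetricDim (corona G H) = Fintype.card α * localMetricDim H := by
  classical
  obtain ⟨hH2, hHc, hedge⟩ := gdiam_facts hd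
  -- distance abbreviations
  have dII : ∀ (a a' : α), (corona G H).dist (Sum.inl a) (Sum.inl a') = G.dist a a' :=
    corona_dist_inl_inl (H := H) hG
  have dIR : ∀ (a' a : α) (b : β),
      (corona G H).dist (Sum.inl a') (Sum.inr (a, b)) = G.dist a' a + 1 :=
    corona_dist_inl_inr hG hHc hH2
  have dRS : ∀ (a : α) (b b' : β),
      (corona G H).dist (Sum.inr (a, b)) (Sum.inr (a, b')) = H.dist b b' :=
    corona_dist_inr_inr_same hG hHc hH2
  have dRN : ∀ {a a' : α}, a ≠ a' → ∀ (b b' : β),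
      (corona G H).dist (Sum.inr (a, b)) (Sum.inr (a', b')) = G.dist a a' + 2 :=
    fun hne => corona_dist_inr_inr_ne hG hHc hH2 hne
  refine le_antisymm ?_ ?_
  · -- upper bound : build a generator from a basis of H
    obtain ⟨B, hBcard, hBgen⟩ := exists_basis H
    have hBne : B.Nonempty := by
      obtain ⟨b, b', hbb⟩ := hedge
      obtain ⟨v, hv, -⟩ := hBgen b b' hbb
      exact ⟨v, hv⟩
    obtain ⟨c0, hc0⟩ := hBne
    set S : Finset (α ⊕ α × β) :=
      (Finset.univ ×ˢ B).image (Sum.inr : α × β → α ⊕ α × β) with hS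
    have hmem : ∀ (a : α) (c : β), c ∈ B → Sum.inr (a, c) ∈ S := by
      intro a c hc
      rw [hS, Finset.mem_image]
      exact ⟨(a, c), Finset.mem_product.mpr ⟨Finset.mem_univ _, hc⟩, rfl⟩
    have hSgen : IsLocalMetricGenerator (corona G H) ↑S := by
      intro x y hxy
      match x, y with
      | Sum.inl a, Sum.inl a' =>
        rw [corona_adj_inl_inl] at hxy
        refine ⟨Sum.inr (a, c0), hmem a c0 hc0, ?_⟩
        rw [SimpleGraph.dist_comm, SimpleGraph.dist_comm (v := Sum.inl a'), dIR, dIR,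
          SimpleGraph.dist_self, SimpleGraph.dist_eq_one_iff_adj.mpr hxy.symm]
        omega
      | Sum.inl a, Sum.inr p =>
        rw [corona_adj_inl_inr] at hxy
        obtain ⟨a1, b⟩ := p
        simp only at hxy
        subst hxy
        obtain ⟨a'', ha''⟩ := Fintype.exists_ne_of_one_lt_card (by omega) a
        refine ⟨Sum.inr (a'', c0), hmem a'' c0 hc0, ?_⟩
        rw [SimpleGraph.dist_comm (G := corona G H) (u := Sum.inr (a'', c0)) (v := Sum.inl a),
          dIR, dRN ha'', SimpleGraph.dist_comm (G := G) (u := a) (v := a'')]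
        omega
      | Sum.inr p, Sum.inl a =>
        rw [corona_adj_inr_inl] at hxy
        obtain ⟨a1, b⟩ := p
        simp only at hxy
        subst hxy
        obtain ⟨a'', ha''⟩ := Fintype.exists_ne_of_one_lt_card (by omega) a
        refine ⟨Sum.inr (a'', c0), hmem a'' c0 hc0, ?_⟩
        rw [SimpleGraph.dist_comm (G := corona G H) (u := Sum.inr (a'', c0)) (v := Sum.inl a),
          dIR, dRN ha'', SimpleGraph.dist_comm (G := G) (u := a) (v := a'')]
        omega
      | Sum.inr p, Sum.inr q =>
        rw [corona_adj_inr_inr] at hxy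
        obtain ⟨a1, b⟩ := p
        obtain ⟨a2, b'⟩ := q
        obtain ⟨h1, h2⟩ := hxy
        simp only at h1 h2
        subst h1
        obtain ⟨c, hc, hcd⟩ := hBgen b b' h2
        refine ⟨Sum.inr (a1, c), hmem a1 c hc, ?_⟩
        rw [dRS, dRS]
        exact hcd
    calc localMetricDim (corona G H) ≤ S.card := localMetricDim_le _ hSgen
      _ = Fintype.card α * localMetricDim H := by
        rw [hS, Finset.card_image_of_injective _ Sum.inr_injective, Finset.card_product,
          Finset.card_univ, hBcard]
  · -- lower bound
    obtain ⟨S, hScard, hSgen⟩ := exists_basis (corona G H)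
    set T : Finset (α × β) := Finset.univ.filter (fun p => Sum.inr p ∈ S) with hT
    have hTS : T.card ≤ S.card := by
      apply Finset.card_le_card_of_injOn Sum.inr
      · intro p hp
        exact (Finset.mem_filter.mp hp).2
      · exact Sum.inr_injective.injOn
    set Sa : α → Finset β := fun a => Finset.univ.filter (fun b => Sum.inr (a, b) ∈ S) with hSa
    have hSagen : ∀ a : α, IsLocalMetricGenerator H ↑(Sa a) := by
      intro a b b' hbb
      have hadj : (corona G H).Adj (Sum.inr (a, b)) (Sum.inr (a, b')) :=
        corona_adj_inr_inr.mpr ⟨rfl, hbb⟩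
      obtain ⟨v, hv, hvd⟩ := hSgen _ _ hadj
      match v with
      | Sum.inl a' =>
        rw [dIR, dIR] at hvd
        exact absurd rfl hvd
      | Sum.inr (a', c) =>
        by_cases h : a' = a
        · subst h
          rw [dRS, dRS] at hvd
          exact ⟨c, Finset.mem_filter.mpr ⟨Finset.mem_univ _, hv⟩, hvd⟩
        · rw [dRN h, dRN h] at hvd
          exact absurd rfl hvd
    have hdim_le : ∀ a : α, localMetricDim H ≤ (Sa a).card :=
      fun a => localMetricDim_le _ (hSagen a)
    have hfiber : ∀ a : α, (T.filter (fun p => p.1 = a)).card = (Sa a).card := by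
      intro a
      apply Finset.card_bij (fun p _ => p.2)
      · intro p hp
        simp only [hT, Finset.mem_filter, Finset.mem_univ, true_and] at hp
        simp only [hSa, Finset.mem_filter, Finset.mem_univ, true_and]
        obtain ⟨hpS, hpa⟩ := hp
        have he : (a, p.2) = p := Prod.ext hpa.symm rfl
        rw [he]
        exact hpS
      · intro p hp q hq hpq
        simp only [hT, Finset.mem_filter] at hp hq
        exact Prod.ext (hp.2.trans hq.2.symm) hpq
      · intro b hb
        refine ⟨(a, b), ?_, rfl⟩
        simp only [hSa, Finset.mem_filter, Finset.mem_univ, true_and] at hb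
        simp only [hT, Finset.mem_filter, Finset.mem_univ, true_and]
        exact ⟨hb, trivial⟩
    have hsum : T.card = ∑ a : α, (Sa a).card := by
      rw [Finset.card_eq_sum_card_fiberwise
        (f := Prod.fst) (t := Finset.univ) (fun p _ => Finset.mem_univ _)]
      exact Finset.sum_congr rfl (fun a _ => hfiber a)
    calc Fintype.card α * localMetricDim H = ∑ _a : α, localMetricDim H := by
          rw [Finset.sum_const, smul_eq_mul, Finset.card_univ]
      _ ≤ ∑ a : α, (Sa a).card := Finset.sum_le_sum (fun a _ => hdim_le a)
      _ = T.card := hsum.symm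
      _ ≤ S.card := hTS
      _ = localMetricDim (corona G H) := hScard
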